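/- 20·√(2/π)·∫_{-∞}^{∞} e^{-2x²}·((1+erf(x))/2)³ dx = 10·(1 - (3/(2π))·arcsec(3)). -/

import Mathlib

open Real MeasureTheory

/-- The error function. -/
noncomputable def erf (x : ℝ) : ℝ :=
  2 / Real.sqrt π * ∫ t in (0:ℝ)..x, Real.exp (-t^2)

namespace Erf12

open intervalIntegral Filter Topology

noncomputable def g (x : ℝ) : ℝ := ∫ t in (0:ℝ)..x, Real.exp (-t^2)

lemma expsq_cont : Continuous (fun t : ℝ => Real.exp (-t^2)) := by
  continuity

lemma g_hasDerivAt (x : ℝ) : HasDerivAt g (Real.exp (-x^2)) x := by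
  refine intervalIntegral.integral_hasDerivAt_right
    (expsq_cont.intervalIntegrable _ _)
    (expsq_cont.stronglyMeasurableAtFilter _ _)
    expsq_cont.continuousAt

lemma g_cont : Continuous g := by
  have := fun x => (g_hasDerivAt x).continuousAt
  exact continuous_iff_continuousAt.2 this

lemma g_odd (x : ℝ) : g (-x) = - g x := by
  unfold g
  have : (∫ t in (0:ℝ)..(-x), Real.exp (-t^2))
      = ∫ t in (0:ℝ)..(-x), Real.exp (-(-t)^2) := by
    congr 1; ext t; ring_nf
  rw [this, intervalIntegral.integral_comp_neg (fun t => Real.exp (-t^2)),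
    show -(-x) = x by ring, show -(0:ℝ) = 0 by ring,
    ← intervalIntegral.integral_symm]

lemma g_nonneg {x : ℝ} (hx : 0 ≤ x) : 0 ≤ g x := by
  apply intervalIntegral.integral_nonneg hx
  intro t _; positivity

lemma g_le {x : ℝ} (hx : 0 ≤ x) : g x ≤ Real.sqrt π / 2 := by
  have h1 : g x = ∫ t in Set.Ioc 0 x, Real.exp (-t^2) := by
    rw [g, intervalIntegral.integral_of_le hx]
  have h2 : ∫ t in Set.Ioi (0:ℝ), Real.exp (-1 * t^2) = Real.sqrt (π/1) / 2 :=
    integral_gaussian_Ioi 1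
  simp only [neg_mul, one_mul, div_one] at h2
  rw [h1, ← h2]
  apply setIntegral_mono_set
  · exact (integrable_exp_neg_mul_sq one_pos).integrableOn.congr_fun
      (by intro t _; ring_nf) measurableSet_Ioi |>.congr_fun (fun t _ => rfl) measurableSet_Ioi
  · filter_upwards with t using by positivity
  · exact HasSubset.Subset.eventuallyLE Set.Ioc_subset_Ioi_self

lemma g_abs_le (x : ℝ) : |g x| ≤ Real.sqrt π / 2 := by
  rcases le_total 0 x with h | h
  · rw [abs_of_nonneg (g_nonneg h)]; exact g_le h
  · have : g x = - g (-x) := by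
      have h2 := g_odd (-x); simp only [neg_neg] at h2; linarith
    rw [this, abs_neg, abs_of_nonneg (g_nonneg (by linarith))]
    exact g_le (by linarith)

lemma int_xg (a : ℝ) (ha : 0 < a) :
    Integrable (fun x : ℝ => x * Real.exp (-a * x^2) * g x) := by
  have h := integrable_mul_exp_neg_mul_sq ha
  have : Integrable (fun x : ℝ => g x * (x * Real.exp (-a * x^2))) := by
    apply h.bdd_mul g_cont.aestronglyMeasurable
    exact Filter.Eventually.of_forall (fun x => by simpa using g_abs_le x)
  exact this.congr (by filter_upwards with x; ring)

lemma tendsto_psi (a : ℝ) (ha : 0 < a) (l : Filter ℝ)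
    (hl : Tendsto (fun x : ℝ => x^2) l atTop) :
    Tendsto (fun x : ℝ => -(Real.exp (-a * x^2) / (2*a)) * g x) l (𝓝 0) := by
  apply squeeze_zero_norm
    (a := fun x => Real.exp (-a * x^2) / (2*a) * (Real.sqrt π / 2))
  · intro x
    have he : ‖-(Real.exp (-a * x^2) / (2*a)) * g x‖
        = Real.exp (-a * x^2) / (2*a) * |g x| := by
      rw [norm_mul, norm_neg, Real.norm_eq_abs, Real.norm_eq_abs, abs_div,
        abs_of_nonneg (Real.exp_nonneg _), abs_of_pos (by positivity : (0:ℝ) < 2*a)]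
    rw [he]
    exact mul_le_mul_of_nonneg_left (g_abs_le x) (by positivity)
  · have h1 : Tendsto (fun x : ℝ => -a * x^2) l atBot := by
      have := (hl.const_mul_atTop ha)
      have h2 : Tendsto (fun x : ℝ => -(a * x^2)) l atBot :=
        tendsto_neg_atTop_atBot.comp this
      exact h2.congr (fun x => by ring)
    have h3 : Tendsto (fun x : ℝ => Real.exp (-a * x^2)) l (𝓝 0) :=
      Real.tendsto_exp_atBot.comp h1
    have := (h3.div_const (2*a)).mul_const (Real.sqrt π / 2)
    simpa using this

lemma sq_tendsto_atTop : Tendsto (fun x : ℝ => x^2) atTop atTop :=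
  tendsto_pow_atTop (by norm_num)

lemma sq_tendsto_atBot : Tendsto (fun x : ℝ => x^2) atBot atTop := by
  have : Tendsto (fun x : ℝ => (-x)^2) atBot atTop :=
    sq_tendsto_atTop.comp tendsto_neg_atBot_atTop
  exact this.congr (fun x => by ring)

lemma inner_integral (t : ℝ) :
    ∫ x : ℝ, x * Real.exp (-(2+t^2) * x^2) * g x
      = Real.sqrt (π / (3+t^2)) / (2*(2+t^2)) := by
  set a : ℝ := 2 + t^2 with ha_def
  have ha : 0 < a := by positivity
  set ψ : ℝ → ℝ := fun x => -(Real.exp (-a * x^2) / (2*a)) * g x with hψ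
  have hderiv : ∀ x, HasDerivAt ψ
      (x * Real.exp (-a * x^2) * g x - Real.exp (-(a+1) * x^2) / (2*a)) x := by
    intro x
    have h1 : HasDerivAt (fun x : ℝ => -(Real.exp (-a * x^2) / (2*a)))
        (x * Real.exp (-a * x^2)) x := by
      have : HasDerivAt (fun x : ℝ => -a * x^2) (-a * (2*x)) x := by
        simpa using ((hasDerivAt_pow 2 x).const_mul (-a))
      have h2 := (Real.hasDerivAt_exp (-a * x^2)).comp x this
      have h3 := (h2.div_const (2*a)).neg
      refine h3.congr_deriv ?_
      field_simp
    have := h1.mul (g_hasDerivAt x)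
    refine this.congr_deriv ?_
    rw [show -(a+1) * x^2 = (-a * x^2) + (-x^2) by ring, Real.exp_add]
    field_simp
    ring
  have hint : Integrable (fun x : ℝ =>
      x * Real.exp (-a * x^2) * g x - Real.exp (-(a+1) * x^2) / (2*a)) := by
    exact (int_xg a ha).sub ((integrable_exp_neg_mul_sq (by positivity : (0:ℝ) < a+1)).div_const _)
  have hbot : Tendsto ψ atBot (𝓝 0) := tendsto_psi a ha _ sq_tendsto_atBot
  have htop : Tendsto ψ atTop (𝓝 0) := tendsto_psi a ha _ sq_tendsto_atTop
  have key := integral_of_hasDerivAt_of_tendsto hderiv hint hbot htop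
  rw [sub_zero] at key
  have hsplit : ∫ x : ℝ, (x * Real.exp (-a * x^2) * g x - Real.exp (-(a+1) * x^2) / (2*a))
      = (∫ x : ℝ, x * Real.exp (-a * x^2) * g x) - (∫ x : ℝ, Real.exp (-(a+1) * x^2)) / (2*a) := by
    rw [integral_sub (int_xg a ha)
      ((integrable_exp_neg_mul_sq (by positivity : (0:ℝ) < a+1)).div_const _),
      _root_.MeasureTheory.integral_div]
  rw [hsplit] at key
  have hg : ∫ x : ℝ, Real.exp (-(a+1) * x^2) = Real.sqrt (π / (a+1)) := integral_gaussian (a+1)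
  rw [hg] at key
  have : a + 1 = 3 + t^2 := by rw [ha_def]; ring
  rw [this] at key
  linarith [key]

noncomputable def Φ (t : ℝ) : ℝ := ∫ x : ℝ, Real.exp (-2 * x^2) * g x * g (t*x)

lemma int_e2g (h : ℝ → ℝ) (hc : Continuous h) (C : ℝ) (hC : ∀ x, |h x| ≤ C) :
    Integrable (fun x : ℝ => Real.exp (-2 * x^2) * h x) := by
  have := (integrable_exp_neg_mul_sq (by norm_num : (0:ℝ) < 2)).bdd_mul
    hc.aestronglyMeasurable (c := C) (Filter.Eventually.of_forall fun x => by simpa using hC x)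
  exact this.congr (by filter_upwards with x; ring)

lemma Φ_hasDerivAt (t : ℝ) :
    HasDerivAt Φ (Real.sqrt (π / (3+t^2)) / (2*(2+t^2))) t := by
  have key : HasDerivAt Φ
      (∫ x : ℝ, Real.exp (-2 * x^2) * g x * (x * Real.exp (-(t*x)^2))) t := by
    have := _root_.hasDerivAt_integral_of_dominated_loc_of_deriv_le
      (F := fun s x => Real.exp (-2 * x^2) * g x * g (s*x))
      (F' := fun s x => Real.exp (-2 * x^2) * g x * (x * Real.exp (-(s*x)^2)))
      (x₀ := t)
      (bound := fun x => Real.exp (-2 * x^2) * (Real.sqrt π / 2) * |x|)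
      (μ := volume) (s := Metric.ball t 1) (Metric.ball_mem_nhds t one_pos)
      ?_ ?_ ?_ ?_ ?_ ?_
    · exact this.2
    · filter_upwards with s
      exact (((Real.continuous_exp.comp (by continuity)).mul g_cont).mul
        (g_cont.comp (continuous_const.mul continuous_id))).aestronglyMeasurable
    · have h := int_e2g (fun x => g x * g (t*x))
        (g_cont.mul (g_cont.comp (continuous_const.mul continuous_id)))
        ((Real.sqrt π / 2) * (Real.sqrt π / 2))
        (fun x => by
          rw [abs_mul]
          exact mul_le_mul (g_abs_le x) (g_abs_le _) (abs_nonneg _) (by positivity))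
      exact h.congr (by filter_upwards with x; ring)
    · exact (((Real.continuous_exp.comp (by continuity)).mul g_cont).mul
        (continuous_id.mul (Real.continuous_exp.comp (by continuity)))).aestronglyMeasurable
    · filter_upwards with x
      intro s _
      have h1 : Real.exp (-(s*x)^2) ≤ 1 := Real.exp_le_one_iff.2 (neg_nonpos.2 (sq_nonneg _))
      calc ‖Real.exp (-2 * x^2) * g x * (x * Real.exp (-(s*x)^2))‖
          = Real.exp (-2 * x^2) * |g x| * (|x| * Real.exp (-(s*x)^2)) := by
            rw [norm_mul, norm_mul, norm_mul, Real.norm_eq_abs, Real.norm_eq_abs,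
              Real.norm_eq_abs, Real.norm_eq_abs, abs_of_nonneg (Real.exp_nonneg _),
              abs_of_nonneg (Real.exp_nonneg _)]
        _ ≤ Real.exp (-2 * x^2) * (Real.sqrt π / 2) * (|x| * 1) := by
            gcongr
            exact g_abs_le x
        _ = Real.exp (-2 * x^2) * (Real.sqrt π / 2) * |x| := by ring
    · have h := (integrable_mul_exp_neg_mul_sq (by norm_num : (0:ℝ) < 2)).abs
      have h2 : Integrable (fun x : ℝ => |x * Real.exp (-2 * x^2)| * (Real.sqrt π / 2)) :=
        h.mul_const _
      apply h2.congr
      filter_upwards with x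
      rw [abs_mul, abs_of_nonneg (Real.exp_nonneg _)]
      ring
    · filter_upwards with x
      intro s _
      have h1 : HasDerivAt (fun s : ℝ => g (s*x)) (Real.exp (-(s*x)^2) * x) s := by
        have := (g_hasDerivAt (s*x)).comp s (hasDerivAt_mul_const x)
        exact this
      have := h1.const_mul (Real.exp (-2 * x^2) * g x)
      refine this.congr_deriv ?_
      ring
  have heq : (∫ x : ℝ, Real.exp (-2 * x^2) * g x * (x * Real.exp (-(t*x)^2)))
      = ∫ x : ℝ, x * Real.exp (-(2+t^2) * x^2) * g x := by
    congr 1; ext x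
    rw [show -(2+t^2) * x^2 = (-2*x^2) + (-(t*x)^2) by ring, Real.exp_add]
    ring
  rw [heq, inner_integral t] at key
  exact key

lemma antideriv_hasDerivAt (t : ℝ) :
    HasDerivAt (fun t : ℝ => Real.sqrt π / (2*Real.sqrt 2)
        * Real.arctan (t / (Real.sqrt 2 * Real.sqrt (3+t^2))))
      (Real.sqrt (π / (3+t^2)) / (2*(2+t^2))) t := by
  set s : ℝ := Real.sqrt (3+t^2) with hs_def
  have hs : 0 < s := Real.sqrt_pos.2 (by positivity)
  have hs2 : s^2 = 3+t^2 := Real.sq_sqrt (by positivity)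
  have h2 : (Real.sqrt 2)^2 = 2 := Real.sq_sqrt (by norm_num)
  have h2pos : (0:ℝ) < Real.sqrt 2 := Real.sqrt_pos.2 (by norm_num)
  have hinner : HasDerivAt (fun t : ℝ => 3+t^2) (2*t) t := by
    simpa using ((hasDerivAt_pow 2 t).const_add 3)
  have hsq : HasDerivAt (fun t : ℝ => Real.sqrt (3+t^2)) (1/(2*s) * (2*t)) t :=
    (Real.hasDerivAt_sqrt (by positivity)).comp t hinner
  have hden : HasDerivAt (fun t : ℝ => Real.sqrt 2 * Real.sqrt (3+t^2))
      (Real.sqrt 2 * (1/(2*s) * (2*t))) t := hsq.const_mul _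
  have hu : HasDerivAt (fun t : ℝ => t / (Real.sqrt 2 * Real.sqrt (3+t^2)))
      ((1 * (Real.sqrt 2 * s) - t * (Real.sqrt 2 * (1/(2*s) * (2*t)))) / (Real.sqrt 2 * s)^2) t :=
    (hasDerivAt_id t).div hden (by positivity)
  have harc := (Real.hasDerivAt_arctan (t / (Real.sqrt 2 * s))).comp t hu
  have hfull := harc.const_mul (Real.sqrt π / (2*Real.sqrt 2))
  refine hfull.congr_deriv ?_
  have hx : Real.sqrt (π / (3+t^2)) = Real.sqrt π / s := by
    rw [hs_def, Real.sqrt_div pi_pos.le]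
  rw [hx]
  field_simp
  linear_combination t^2 * hs2 - s^2 * h2

lemma K0 : ∫ x : ℝ, Real.exp (-2 * x^2) * (g x)^2
    = Real.sqrt π / (2*Real.sqrt 2) * Real.arctan (1/(2*Real.sqrt 2)) := by
  have hDcont : Continuous (fun t : ℝ => Real.sqrt (π / (3+t^2)) / (2*(2+t^2))) := by
    apply Continuous.div
    · exact Real.continuous_sqrt.comp
        (continuous_const.div (by continuity) (fun t => by positivity))
    · continuity
    · intro t; positivity
  have h1 : Φ 1 - Φ 0 = ∫ t in (0:ℝ)..1, Real.sqrt (π / (3+t^2)) / (2*(2+t^2)) :=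
    (intervalIntegral.integral_eq_sub_of_hasDerivAt
      (fun t _ => Φ_hasDerivAt t) (hDcont.intervalIntegrable _ _)).symm
  have h2 : (∫ t in (0:ℝ)..1, Real.sqrt (π / (3+t^2)) / (2*(2+t^2)))
      = Real.sqrt π / (2*Real.sqrt 2) * Real.arctan (1/(2*Real.sqrt 2)) := by
    rw [intervalIntegral.integral_eq_sub_of_hasDerivAt
      (fun t _ => antideriv_hasDerivAt t) (hDcont.intervalIntegrable _ _)]
    have h3 : Real.sqrt (3+(1:ℝ)^2) = 2 := by
      rw [show (3:ℝ)+(1:ℝ)^2 = 4 by norm_num, show (4:ℝ) = 2^2 by norm_num,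
        Real.sqrt_sq (by norm_num)]
    have h0 : Real.sqrt (3+(0:ℝ)^2) = Real.sqrt 3 := by norm_num
    simp only [h3, h0]
    rw [show (0:ℝ) / (Real.sqrt 2 * Real.sqrt 3) = 0 by simp, Real.arctan_zero]
    rw [show (1:ℝ) / (Real.sqrt 2 * 2) = 1/(2*Real.sqrt 2) by ring_nf]
    ring
  have hphi0 : Φ 0 = 0 := by
    unfold Φ
    simp [g, intervalIntegral.integral_same]
  have hphi1 : Φ 1 = ∫ x : ℝ, Real.exp (-2 * x^2) * (g x)^2 := by
    unfold Φ
    congr 1; ext x; rw [one_mul]; ring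
  rw [hphi0, hphi1, sub_zero] at h1
  rw [h1, h2]

lemma odd_vanish1 : ∫ x : ℝ, Real.exp (-2 * x^2) * g x = 0 := by
  have h := integral_neg_eq_self (fun x : ℝ => Real.exp (-2 * x^2) * g x) volume
  have h2 : (∫ x : ℝ, Real.exp (-2 * (-x)^2) * g (-x))
      = ∫ x : ℝ, -(Real.exp (-2 * x^2) * g x) := by
    congr 1; ext x; rw [g_odd, neg_sq]; ring
  rw [h2, _root_.MeasureTheory.integral_neg] at h
  linarith

lemma odd_vanish3 : ∫ x : ℝ, Real.exp (-2 * x^2) * (g x)^3 = 0 := by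
  have h := integral_neg_eq_self (fun x : ℝ => Real.exp (-2 * x^2) * (g x)^3) volume
  have h2 : (∫ x : ℝ, Real.exp (-2 * (-x)^2) * (g (-x))^3)
      = ∫ x : ℝ, -(Real.exp (-2 * x^2) * (g x)^3) := by
    congr 1; ext x; rw [g_odd, neg_sq]; ring
  rw [h2, _root_.MeasureTheory.integral_neg] at h
  linarith

lemma arctan_eq : Real.arctan (1/(2*Real.sqrt 2)) = Real.arcsin (1/3) := by
  have h2 : (Real.sqrt 2)^2 = 2 := Real.sq_sqrt (by norm_num)
  have h2pos : (0:ℝ) < Real.sqrt 2 := Real.sqrt_pos.2 (by norm_num)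
  rw [Real.arctan_eq_arcsin]
  congr 1
  have he : (1:ℝ) + (1/(2*Real.sqrt 2))^2 = (3/(2*Real.sqrt 2))^2 := by
    field_simp
    linear_combination 4 * h2
  rw [he, Real.sqrt_sq (by positivity)]
  field_simp

end Erf12

open Erf12 in
theorem stmt_12 :
    20 * Real.sqrt (2/π) *
        (∫ x : ℝ, Real.exp (-2 * x^2) * ((1 + erf x) / 2) ^ 3)
      = 10 * (1 - 3 / (2*π) * Real.arccos (1/3)) := by
  have hπpos := Real.pi_pos
  have hsπ : (Real.sqrt π)^2 = π := Real.sq_sqrt hπpos.le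
  have hsπpos : (0:ℝ) < Real.sqrt π := Real.sqrt_pos.2 hπpos
  have h2 : (Real.sqrt 2)^2 = 2 := Real.sq_sqrt (by norm_num)
  have h2pos : (0:ℝ) < Real.sqrt 2 := Real.sqrt_pos.2 (by norm_num)
  -- expand the integrand
  have expand : ∀ x : ℝ, Real.exp (-2 * x^2) * ((1 + erf x) / 2) ^ 3
      = (1/8) * Real.exp (-2 * x^2)
        + (3/(4*Real.sqrt π)) * (Real.exp (-2 * x^2) * g x)
        + (3/(2*π)) * (Real.exp (-2 * x^2) * (g x)^2)
        + (1/(π*Real.sqrt π)) * (Real.exp (-2 * x^2) * (g x)^3) := by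
    intro x
    have herf : erf x = 2 / Real.sqrt π * g x := rfl
    rw [herf, ← hsπ]
    have hne : Real.sqrt π ≠ 0 := ne_of_gt hsπpos
    field_simp
    rw [Real.sqrt_sq hsπpos.le]
    ring
  -- integrability of pieces
  have i0 : Integrable (fun x : ℝ => Real.exp (-2 * x^2)) :=
    integrable_exp_neg_mul_sq (by norm_num)
  have i1 : Integrable (fun x : ℝ => Real.exp (-2 * x^2) * g x) :=
    int_e2g g g_cont _ g_abs_le
  have i2 : Integrable (fun x : ℝ => Real.exp (-2 * x^2) * (g x)^2) := by
    apply int_e2g _ (g_cont.pow 2) ((Real.sqrt π / 2)^2)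
    intro x
    rw [Pi.pow_apply, abs_pow]
    exact pow_le_pow_left₀ (abs_nonneg _) (g_abs_le x) 2
  have i3 : Integrable (fun x : ℝ => Real.exp (-2 * x^2) * (g x)^3) := by
    apply int_e2g _ (g_cont.pow 3) ((Real.sqrt π / 2)^3)
    intro x
    rw [Pi.pow_apply, abs_pow]
    exact pow_le_pow_left₀ (abs_nonneg _) (g_abs_le x) 3
  have hsplit : (∫ x : ℝ, Real.exp (-2 * x^2) * ((1 + erf x) / 2) ^ 3)
      = (1/8) * (∫ x : ℝ, Real.exp (-2 * x^2))
        + (3/(4*Real.sqrt π)) * (∫ x : ℝ, Real.exp (-2 * x^2) * g x)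
        + (3/(2*π)) * (∫ x : ℝ, Real.exp (-2 * x^2) * (g x)^2)
        + (1/(π*Real.sqrt π)) * (∫ x : ℝ, Real.exp (-2 * x^2) * (g x)^3) := by
    rw [show (fun x : ℝ => Real.exp (-2 * x^2) * ((1 + erf x) / 2) ^ 3)
        = fun x : ℝ => (1/8) * Real.exp (-2 * x^2)
          + (3/(4*Real.sqrt π)) * (Real.exp (-2 * x^2) * g x)
          + (3/(2*π)) * (Real.exp (-2 * x^2) * (g x)^2)
          + (1/(π*Real.sqrt π)) * (Real.exp (-2 * x^2) * (g x)^3) from funext expand]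
    have j0 : Integrable (fun x : ℝ => (1/8) * Real.exp (-2 * x^2)) := i0.const_mul _
    have j1 : Integrable (fun x : ℝ => (3/(4*Real.sqrt π)) * (Real.exp (-2 * x^2) * g x)) :=
      i1.const_mul _
    have j2 : Integrable (fun x : ℝ => (3/(2*π)) * (Real.exp (-2 * x^2) * (g x)^2)) :=
      i2.const_mul _
    have j3 : Integrable (fun x : ℝ => (1/(π*Real.sqrt π)) * (Real.exp (-2 * x^2) * (g x)^3)) :=
      i3.const_mul _
    have j01 : Integrable (fun x : ℝ => (1/8) * Real.exp (-2 * x^2)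
        + (3/(4*Real.sqrt π)) * (Real.exp (-2 * x^2) * g x)) := j0.add j1
    have j012 : Integrable (fun x : ℝ => ((1/8) * Real.exp (-2 * x^2)
        + (3/(4*Real.sqrt π)) * (Real.exp (-2 * x^2) * g x))
        + (3/(2*π)) * (Real.exp (-2 * x^2) * (g x)^2)) := j01.add j2
    rw [show (fun x : ℝ => (1/8) * Real.exp (-2 * x^2)
          + (3/(4*Real.sqrt π)) * (Real.exp (-2 * x^2) * g x)
          + (3/(2*π)) * (Real.exp (-2 * x^2) * (g x)^2)
          + (1/(π*Real.sqrt π)) * (Real.exp (-2 * x^2) * (g x)^3))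
        = (fun x : ℝ => (((1/8) * Real.exp (-2 * x^2)
          + (3/(4*Real.sqrt π)) * (Real.exp (-2 * x^2) * g x))
          + (3/(2*π)) * (Real.exp (-2 * x^2) * (g x)^2))
          + (1/(π*Real.sqrt π)) * (Real.exp (-2 * x^2) * (g x)^3)) from rfl,
      integral_add j012 j3, integral_add j01 j2, integral_add j0 j1,
      _root_.MeasureTheory.integral_const_mul, _root_.MeasureTheory.integral_const_mul,
      _root_.MeasureTheory.integral_const_mul, _root_.MeasureTheory.integral_const_mul]
  have hgauss : ∫ x : ℝ, Real.exp (-2 * x^2) = Real.sqrt (π/2) := integral_gaussian 2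
  rw [hsplit, hgauss, odd_vanish1, odd_vanish3, K0, arctan_eq]
  -- now pure algebra with square roots
  have hs1 : Real.sqrt (2/π) * Real.sqrt (π/2) = 1 := by
    rw [← Real.sqrt_mul (by positivity)]
    rw [show (2/π) * (π/2) = 1 by field_simp]
    exact Real.sqrt_one
  have hsd : Real.sqrt (2/π) = Real.sqrt 2 / Real.sqrt π :=
    Real.sqrt_div (by norm_num) π
  have hq : Real.sqrt 2 * Real.sqrt (π/2) = Real.sqrt π := by
    rw [← Real.sqrt_mul (by norm_num : (0:ℝ) ≤ 2), show 2*(π/2) = π by ring]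
  rw [Real.arccos_eq_pi_div_two_sub_arcsin, hsd]
  field_simp
  ring_nf
  rw [show π * (1/2) = π/2 by ring]
  linear_combination (320*π*Real.sqrt π) * hq
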